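/- Let k ≥ 2 and let G be a properly edge-coloured graph on n vertices with no rainbow C_{2k}. Then there is a constant C = C(k) such that the number of paths (x,y,z) in G for which x and z have at least 100k common neighbours is at most C·|E(G)|. -/

import Mathlib

open SimpleGraph

/-- A colouring of (potential) edges is proper on `G` if no two distinct edges of `G`
sharing a vertex receive the same colour. -/
def ProperColoring {V γ : Type*} (G : SimpleGraph V) (c : Sym2 V → γ) : Prop :=
  ∀ e f : Sym2 V, e ∈ G.edgeSet → f ∈ G.edgeSet → e ≠ f → (∃ v, v ∈ e ∧ v ∈ f) → c e ≠ c f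

/-- `G` (with colouring `c`) contains a rainbow cycle of length `t`. -/
def HasRainbowCycle {V γ : Type*} (G : SimpleGraph V) (c : Sym2 V → γ) (t : ℕ) : Prop :=
  ∃ (u : V) (w : G.Walk u u), w.IsCycle ∧ w.length = t ∧ (w.edges.map c).Nodup

section Auxiliary

open List

variable {V : Type} {γ : Type}

/-- greedy path: with min degree ≥ k inside s, there is a nodup chain of length k. -/
lemma exists_long_chain [DecidableEq V] (r : V → V → Prop) [DecidableRel r] (hsym : ∀ a b, r a b → r b a)
    (s : Finset V) (k : ℕ) (hdeg : ∀ v ∈ s, k ≤ (s.filter (fun b => r v b)).card)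
    (hne : s.Nonempty) :
    ∃ l : List V, (∀ x ∈ l, x ∈ s) ∧ l.Nodup ∧ l.Chain' r ∧ k ≤ l.length := by
  obtain ⟨v, hv⟩ := hne
  -- iterate: extend list j times
  suffices h : ∀ j : ℕ, ∃ l : List V, (∀ x ∈ l, x ∈ s) ∧ l.Nodup ∧ l.Chain' r ∧
      min (j + 1) k ≤ l.length by
    obtain ⟨l, h1, h2, h3, h4⟩ := h k
    have hmin : min (k + 1) k = k := by omega
    exact ⟨l, h1, h2, h3, by omega⟩
  intro j
  induction j with
  | zero => exact ⟨[v], by simpa using hv, by simp, List.isChain_singleton _, by simp⟩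
  | succ j ih =>
    obtain ⟨l, h1, h2, h3, h4⟩ := ih
    rcases le_or_gt k l.length with hk | hk
    · exact ⟨l, h1, h2, h3, le_trans (min_le_right _ _) hk⟩
    · -- extend at the head
      obtain ⟨x, t, rfl⟩ : ∃ x t, l = x :: t := by
        rcases l with _ | ⟨x, t⟩
        · simp at h4; omega
        · exact ⟨x, t, rfl⟩
      have hx := h1 x (by simp)
      have hcard : ((s.filter (fun b => r x b)) \ (x :: t).toFinset).card > 0 := by
        have h5 := hdeg x hx
        have h6 : (x :: t).toFinset.card ≤ (x :: t).length := List.toFinset_card_le _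
        have := Finset.le_card_sdiff ((x :: t).toFinset) (s.filter (fun b => r x b))
        omega
      obtain ⟨w, hw⟩ := Finset.card_pos.mp hcard
      rw [Finset.mem_sdiff, Finset.mem_filter] at hw
      refine ⟨w :: x :: t, ?_, ?_, ?_, ?_⟩
      · intro z hz; rcases List.mem_cons.mp hz with rfl | hz
        · exact hw.1.1
        · exact h1 z hz
      · refine List.nodup_cons.mpr ⟨?_, h2⟩
        intro hmem; exact hw.2 (List.mem_toFinset.mpr hmem)
      · exact List.isChain_cons_cons.mpr ⟨hsym _ _ hw.1.2, h3⟩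
      · simp only [List.length_cons] at h4 ⊢; omega

lemma nopath_pairs [DecidableEq V] (r : V → V → Prop) [DecidableRel r] (hsym : ∀ a b, r a b → r b a)
    (k : ℕ) (hk : 1 ≤ k) (s : Finset V)
    (hnp : ∀ l : List V, (∀ x ∈ l, x ∈ s) → l.Nodup → l.Chain' r → l.length < k) :
    ((s ×ˢ s).filter (fun p => r p.1 p.2)).card ≤ 2 * k * s.card := by
  induction s using Finset.strongInduction with
  | _ s ih =>
    rcases s.eq_empty_or_nonempty with rfl | hne
    · simp
    -- find a low degree vertex
    have hlow : ∃ v ∈ s, (s.filter (fun b => r v b)).card < k := by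
      by_contra hco
      push_neg at hco
      obtain ⟨l, h1, h2, h3, h4⟩ := exists_long_chain r hsym s k hco hne
      exact absurd (hnp l h1 h2 h3) (by omega)
    obtain ⟨v, hv, hdv⟩ := hlow
    have hsub : s.erase v ⊂ s := Finset.erase_ssubset hv
    have IH := ih (s.erase v) hsub (fun l h1 h2 h3 =>
      hnp l (fun x hx => Finset.mem_of_mem_erase (h1 x hx)) h2 h3)
    -- split pairs
    set P := (s ×ˢ s).filter (fun p => r p.1 p.2) with hP
    set P' := ((s.erase v) ×ˢ (s.erase v)).filter (fun p => r p.1 p.2) with hP'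
    set F1 := P.filter (fun p => p.1 = v) with hF1
    set F2 := P.filter (fun p => p.2 = v) with hF2
    have hcover : P ⊆ P' ∪ F1 ∪ F2 := by
      intro p hp
      simp only [hP, Finset.mem_filter, Finset.mem_product] at hp
      by_cases h1 : p.1 = v
      · simp [hF1, hP, Finset.mem_union, Finset.mem_filter, Finset.mem_product]; tauto
      by_cases h2 : p.2 = v
      · simp [hF2, hP, Finset.mem_union, Finset.mem_filter, Finset.mem_product]; tauto
      · simp only [Finset.mem_union, hP', Finset.mem_filter, Finset.mem_product,
          Finset.mem_erase]
        exact Or.inl (Or.inl ⟨⟨⟨h1, hp.1.1⟩, h2, hp.1.2⟩, hp.2⟩)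
    have hF1card : F1.card ≤ k := by
      have : F1.card ≤ (s.filter (fun b => r v b)).card := by
        apply Finset.card_le_card_of_injOn (fun p => p.2)
        · intro p hp
          simp only [Finset.mem_coe, hF1, hP, Finset.mem_filter, Finset.mem_product] at hp
          obtain ⟨⟨⟨_, hp2⟩, hr⟩, h1⟩ := hp
          subst h1
          exact Finset.mem_filter.mpr ⟨hp2, hr⟩
        · intro p hp q hq hpq
          simp only [Finset.mem_coe, hF1, Finset.mem_filter] at hp hq
          exact Prod.ext (by rw [hp.2, hq.2]) hpq
      omega
    have hF2card : F2.card ≤ k := by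
      have : F2.card ≤ (s.filter (fun b => r v b)).card := by
        apply Finset.card_le_card_of_injOn (fun p => p.1)
        · intro p hp
          simp only [Finset.mem_coe, hF2, hP, Finset.mem_filter, Finset.mem_product] at hp
          obtain ⟨⟨⟨hp1, _⟩, hr⟩, h2⟩ := hp
          exact Finset.mem_filter.mpr ⟨hp1, hsym _ _ (h2 ▸ hr)⟩
        · intro p hp q hq hpq
          simp only [Finset.mem_coe, hF2, Finset.mem_filter] at hp hq
          exact Prod.ext hpq (by rw [hp.2, hq.2])
      omega
    have hcard : P.card ≤ P'.card + F1.card + F2.card :=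
      le_trans (Finset.card_le_card hcover)
        (le_trans (Finset.card_union_le _ _)
          (by have := Finset.card_union_le P' F1; omega))
    have hscard : (s.erase v).card = s.card - 1 := Finset.card_erase_of_mem hv
    have hpos : 1 ≤ s.card := Finset.card_pos.mpr hne
    rw [hscard] at IH
    have key : 2 * k * (s.card - 1) + 2 * k = 2 * k * s.card := by
      rw [← Nat.mul_succ, Nat.succ_eq_add_one, Nat.sub_add_cancel hpos]
    omega

def sym2List (l : List V) : List (Sym2 V) := List.zipWith (fun u v => s(u, v)) l l.tail

@[simp] lemma sym2List_nil : sym2List ([] : List V) = [] := rfl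
@[simp] lemma sym2List_single (a : V) : sym2List [a] = [] := rfl
@[simp] lemma sym2List_cons_cons (a b : V) (l : List V) :
    sym2List (a :: b :: l) = s(a, b) :: sym2List (b :: l) := rfl

/-- the auxiliary "many common neighbours" relation among neighbours of `y`. -/
def Rrel (G : SimpleGraph V) (k : ℕ) (y a b : V) : Prop :=
  G.Adj y a ∧ G.Adj y b ∧ a ≠ b ∧ 100 * k ≤ (G.neighborSet a ∩ G.neighborSet b).ncard

lemma color_inj_left {G : SimpleGraph V} {c : Sym2 V → γ} (hG : ProperColoring G c)
    {x w w' : V} (h : G.Adj x w) (h' : G.Adj x w') (hne : w ≠ w') :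
    c s(x, w) ≠ c s(x, w') :=
  hG _ _ (G.mem_edgeSet.mpr h) (G.mem_edgeSet.mpr h')
    (fun he => hne (Sym2.congr_right.mp he)) ⟨x, by simp, by simp⟩

lemma greedy [Fintype V] [DecidableEq V] {G : SimpleGraph V} [DecidableRel G.Adj]
    {c : Sym2 V → γ} [DecidableEq γ] (hG : ProperColoring G c) (k : ℕ) (y : V) :
    ∀ (xs : List V) (x : V) (A : Finset V) (B : Finset γ),
    List.Chain (Rrel G k y) x xs → (x :: xs).Nodup →
    x ∈ A → (∀ z ∈ xs, z ∈ A) →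
    A.card + 2 * B.card + 5 * xs.length ≤ 100 * k →
    ∃ m : List V,
      m.length = 2 * xs.length ∧
      List.Chain' G.Adj (x :: m) ∧
      (x :: m).getLast? = (x :: xs).getLast? ∧
      (x :: m).Nodup ∧
      (∀ v ∈ m, v ∈ A → v ∈ xs) ∧
      ((sym2List (x :: m)).map c).Nodup ∧
      (∀ β ∈ (sym2List (x :: m)).map c, β ∉ B) := by
  intro xs
  induction xs with
  | nil =>
    intro x A B _ _ _ _ _
    exact ⟨[], by simp, List.isChain_singleton _, by simp, by simp, by simp, by simp, by simp⟩
  | cons z t ih =>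
    intro x A B hch hnd hxA hxsA hbud
    have hR : Rrel G k y x z := (List.chain_cons.mp hch).1
    have hcht : List.Chain (Rrel G k y) z t := (List.chain_cons.mp hch).2
    obtain ⟨hyx, hyz, hxz, hcodeg⟩ := hR
    -- the candidate set
    set N : Finset V := G.neighborFinset x ∩ G.neighborFinset z with hNdef
    have hNcard : 100 * k ≤ N.card := by
      have : (G.neighborSet x ∩ G.neighborSet z).ncard = N.card := by
        rw [Set.ncard_eq_toFinset_card', hNdef, neighborFinset_def, neighborFinset_def,
          ← Set.toFinset_inter]
      omega
    -- the bad candidates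
    set bad : Finset V :=
      N.filter (fun w => w ∈ A ∨ c s(x, w) ∈ B ∨ c s(w, z) ∈ B) with hbaddef
    have hbadcard : bad.card ≤ A.card + 2 * B.card := by
      have hsub : bad ⊆ (N.filter (fun w => w ∈ A)) ∪
          (N.filter (fun w => c s(x, w) ∈ B)) ∪ (N.filter (fun w => c s(w, z) ∈ B)) := by
        intro w hw
        simp only [hbaddef, Finset.mem_filter] at hw
        simp only [Finset.mem_union, Finset.mem_filter]
        tauto
      have h1 : (N.filter (fun w => w ∈ A)).card ≤ A.card :=
        Finset.card_le_card (fun w hw => (Finset.mem_filter.mp hw).2)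
      have h2 : (N.filter (fun w => c s(x, w) ∈ B)).card ≤ B.card := by
        apply Finset.card_le_card_of_injOn (fun w => c s(x, w))
        · intro w hw; exact (Finset.mem_filter.mp hw).2
        · intro w hw w' hw' hww'
          simp only [Finset.mem_coe, Finset.mem_filter, hNdef, Finset.mem_inter,
            mem_neighborFinset] at hw hw'
          by_contra hne
          exact color_inj_left hG hw.1.1 hw'.1.1 hne hww'
      have h3 : (N.filter (fun w => c s(w, z) ∈ B)).card ≤ B.card := by
        apply Finset.card_le_card_of_injOn (fun w => c s(w, z))
        · intro w hw; exact (Finset.mem_filter.mp hw).2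
        · intro w hw w' hw' hww'
          simp only [Finset.mem_coe, Finset.mem_filter, hNdef, Finset.mem_inter,
            mem_neighborFinset] at hw hw'
          by_contra hne
          have hzw : G.Adj z w := hw.1.2
          have hzw' : G.Adj z w' := hw'.1.2
          have hww2 : c s(z, w) = c s(z, w') := by
            rw [show s(z, w) = s(w, z) from Sym2.eq_swap,
              show s(z, w') = s(w', z) from Sym2.eq_swap]
            exact hww'
          exact color_inj_left hG hzw hzw' hne hww2
      calc bad.card ≤ _ := Finset.card_le_card hsub
        _ ≤ _ := le_trans (Finset.card_union_le _ _)
            (Nat.add_le_add_right (Finset.card_union_le _ _) _)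
        _ ≤ A.card + 2 * B.card := by omega
    -- choose a good candidate
    have hex : ∃ w ∈ N, w ∉ bad := by
      by_contra hco
      push_neg at hco
      have : N ⊆ bad := hco
      have := Finset.card_le_card this
      simp only [List.length_cons] at hbud
      omega
    obtain ⟨w, hwN, hwbad⟩ := hex
    have hxw : G.Adj x w := by
      have := Finset.mem_inter.mp hwN
      exact (mem_neighborFinset _ _ _).mp this.1
    have hzw : G.Adj z w := by
      have := Finset.mem_inter.mp hwN
      exact (mem_neighborFinset _ _ _).mp this.2
    have hwgood : ¬(w ∈ A ∨ c s(x, w) ∈ B ∨ c s(w, z) ∈ B) := by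
      intro h; exact hwbad (Finset.mem_filter.mpr ⟨hwN, h⟩)
    push_neg at hwgood
    obtain ⟨hwA, hcxwB, hcwzB⟩ := hwgood
    -- recursive call
    have hndt : (z :: t).Nodup := hnd.of_cons
    have hzA : z ∈ A := hxsA z (by simp)
    obtain ⟨m', hlen', hch', hlast', hnd', hmem', hcnd', hcB'⟩ :=
      ih z (insert w A) (insert (c s(x, w)) (insert (c s(w, z)) B)) hcht hndt
        (Finset.mem_insert_of_mem hzA)
        (fun u hu => Finset.mem_insert_of_mem (hxsA u (by simp [hu])))
        (by
          have h1 := Finset.card_insert_le w A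
          have h2 := Finset.card_insert_le (c s(x, w)) (insert (c s(w, z)) B)
          have h3 := Finset.card_insert_le (c s(w, z)) B
          simp only [List.length_cons] at hbud
          omega)
    refine ⟨w :: z :: m', by simp [hlen']; omega, ?_, ?_, ?_, ?_, ?_, ?_⟩
    · exact List.isChain_cons_cons.mpr ⟨hxw, List.isChain_cons_cons.mpr ⟨hzw.symm, hch'⟩⟩
    · rw [List.getLast?_cons_cons, List.getLast?_cons_cons, hlast', List.getLast?_cons_cons]
    · -- Nodup
      have hwzm : w ∉ z :: m' := by
        intro hmem
        rcases List.mem_cons.mp hmem with rfl | hmem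
        · exact hwA hzA
        · exact hwA (hxsA w (List.mem_cons_of_mem _ (hmem' w hmem (Finset.mem_insert_self _ _))))
      have hxwzm : x ∉ w :: z :: m' := by
        intro hmem
        rcases List.mem_cons.mp hmem with rfl | hmem
        · exact hwA hxA
        rcases List.mem_cons.mp hmem with rfl | hmem
        · exact hxz rfl
        · have := hmem' x hmem (Finset.mem_insert_of_mem hxA)
          have hx2 : x ∉ z :: t := (List.nodup_cons.mp hnd).1
          exact hx2 (by simp [this])
      exact List.nodup_cons.mpr ⟨hxwzm, List.nodup_cons.mpr ⟨hwzm, hnd'⟩⟩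
    · -- membership
      intro v hv hvA
      rcases List.mem_cons.mp hv with rfl | hv
      · exact absurd hvA hwA
      rcases List.mem_cons.mp hv with rfl | hv
      · simp
      · exact List.mem_cons_of_mem _ (hmem' v hv (Finset.mem_insert_of_mem hvA))
    · -- colours Nodup
      have hcc : c s(x, w) ≠ c s(w, z) := by
        apply hG _ _ (G.mem_edgeSet.mpr hxw) (G.mem_edgeSet.mpr hzw.symm)
        · intro he
          rcases Sym2.eq_iff.mp he with ⟨h1, h2⟩ | ⟨h1, -⟩
          · exact G.loopless.irrefl x (h1 ▸ hxw)
          · exact hxz h1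
        · exact ⟨w, by simp, by simp⟩
      have hx1 : c s(x, w) ∉ (sym2List (z :: m')).map c := fun h =>
        (hcB' _ h) (Finset.mem_insert_self _ _)
      have hx2 : c s(w, z) ∉ (sym2List (z :: m')).map c := fun h =>
        (hcB' _ h) (Finset.mem_insert_of_mem (Finset.mem_insert_self _ _))
      simp only [sym2List_cons_cons, List.map_cons, List.nodup_cons, List.mem_cons]
      exact ⟨by push_neg; exact ⟨hcc, hx1⟩, hx2, hcnd'⟩
    · -- colours avoid B
      intro β hβ
      simp only [sym2List_cons_cons, List.map_cons, List.mem_cons] at hβ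
      rcases hβ with rfl | rfl | hβ
      · exact hcxwB
      · exact hcwzB
      · intro hB
        exact (hcB' β hβ) (Finset.mem_insert_of_mem (Finset.mem_insert_of_mem hB))

lemma sym2List_concat : ∀ (l : List V) (a b d : V), (a :: l).getLast? = some d →
    sym2List ((a :: l) ++ [b]) = sym2List (a :: l) ++ [s(d, b)]
  | [], a, b, d, h => by simp at h; subst h; simp
  | x :: t, a, b, d, h => by
      rw [List.getLast?_cons_cons] at h
      have := sym2List_concat t x b d h
      simp only [List.cons_append] at this ⊢
      rw [sym2List_cons_cons, this, sym2List_cons_cons]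
      simp

lemma chain_of_chain'_concat {r : V → V → Prop} :
    ∀ (l : List V) (a b : V), List.Chain' r (a :: l) →
      (∀ z, (a :: l).getLast? = some z → r z b) → List.Chain r a (l ++ [b])
  | [], a, b, h, hl => List.Chain.cons (hl a (by simp)) List.Chain.nil
  | x :: t, a, b, h, hl => by
      have h1 := List.isChain_cons_cons.mp h
      exact List.Chain.cons h1.1 (chain_of_chain'_concat t x b h1.2
        (fun z hz => hl z (by rwa [List.getLast?_cons_cons])))

section Walkify
-- mkWalk as in p1 (assumed present)
def mkWalk (G : SimpleGraph V) : ∀ (a : V) (l : List V) (b : V),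
    List.Chain G.Adj a (l ++ [b]) → G.Walk a b
  | a, [], b, h => Walk.cons (by simpa using (List.chain_cons.mp h).1) Walk.nil
  | a, x :: l, b, h =>
      Walk.cons (List.chain_cons.mp h).1 (mkWalk G x l b (List.chain_cons.mp h).2)

@[simp] lemma mkWalk_support (G : SimpleGraph V) :
    ∀ (a : V) (l : List V) (b : V) (h : List.Chain G.Adj a (l ++ [b])),
      (mkWalk G a l b h).support = a :: (l ++ [b])
  | a, [], b, h => rfl
  | a, x :: l, b, h => by simp [mkWalk, mkWalk_support G x l b]; exact mkWalk_support G x l b _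

@[simp] lemma mkWalk_edges (G : SimpleGraph V) :
    ∀ (a : V) (l : List V) (b : V) (h : List.Chain G.Adj a (l ++ [b])),
      (mkWalk G a l b h).edges = sym2List (a :: (l ++ [b]))
  | a, [], b, h => rfl
  | a, x :: l, b, h => by simp [mkWalk, mkWalk_edges G x l b]; exact mkWalk_edges G x l b _

@[simp] lemma mkWalk_length (G : SimpleGraph V) :
    ∀ (a : V) (l : List V) (b : V) (h : List.Chain G.Adj a (l ++ [b])),
      (mkWalk G a l b h).length = l.length + 1
  | a, [], b, h => rfl
  | a, x :: l, b, h => by simp [mkWalk, mkWalk_length G x l b]; exact mkWalk_length G x l b _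
end Walkify

lemma chain_y_adj {G : SimpleGraph V} {k : ℕ} {y : V} :
    ∀ (xs : List V) (x : V), List.Chain (Rrel G k y) x xs → ∀ v ∈ xs, G.Adj y v
  | [], x, _, v, hv => by simp at hv
  | z :: t, x, h, v, hv => by
      have h1 := List.chain_cons.mp h
      rcases List.mem_cons.mp hv with rfl | hv
      · exact h1.1.2.1
      · exact chain_y_adj t z h1.2 v hv

lemma key [Fintype V] [DecidableEq V] {G : SimpleGraph V} [DecidableRel G.Adj]
    {c : Sym2 V → γ} [DecidableEq γ] (hG : ProperColoring G c) {k : ℕ} (hk : 2 ≤ k)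
    (hnc : ¬ HasRainbowCycle G c (2 * k)) (y : V) :
    ∀ l : List V, l.Nodup → l.Chain' (Rrel G k y) → l.length < k := by
  intro l hnd hch
  by_contra hlen
  push_neg at hlen
  -- truncate to length exactly k
  set l' : List V := l.take k with hl'def
  have hndl' : l'.Nodup := (List.take_sublist k l).nodup hnd
  have hchl' : l'.Chain' (Rrel G k y) := hch.take k
  have hlenl' : l'.length = k := by
    rw [hl'def, List.length_take]; omega
  obtain ⟨x, xs, hxxs⟩ : ∃ x xs, l' = x :: xs := by
    rcases l' with _ | ⟨x, xs⟩
    · simp at hlenl'; omega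
    · exact ⟨x, xs, rfl⟩
  rw [hxxs] at hndl' hchl' hlenl'
  have hchx : List.Chain (Rrel G k y) x xs := hchl'
  have hxslen : xs.length = k - 1 := by simp at hlenl'; omega
  obtain ⟨z, t, rfl⟩ : ∃ z t, xs = z :: t := by
    rcases xs with _ | ⟨z, t⟩
    · simp at hxslen; omega
    · exact ⟨z, t, rfl⟩
  have hyx : G.Adj y x := (List.chain_cons.mp hchx).1.1
  have hyadj : ∀ v ∈ z :: t, G.Adj y v := chain_y_adj _ x hchx
  have hyl : y ∉ x :: z :: t := by
    intro hmem
    rcases List.mem_cons.mp hmem with rfl | hmem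
    · exact G.loopless.irrefl y hyx
    · exact G.loopless.irrefl y (hyadj y hmem)
  -- apply greedy
  obtain ⟨m, hlenm, hchm, hlastm, hndm, hmemm, hcnd, hcB⟩ :=
    greedy hG k y (z :: t) x (insert y (x :: z :: t).toFinset)
      ((x :: z :: t).toFinset.image (fun v => c s(y, v))) hchx hndl'
      (Finset.mem_insert_of_mem (by simp))
      (fun u hu => Finset.mem_insert_of_mem (by simp at hu ⊢; tauto))
      (by
        have h1 := Finset.card_insert_le y (x :: z :: t).toFinset
        have h2 := Finset.card_image_le (s := (x :: z :: t).toFinset)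
          (f := fun v => c s(y, v))
        have h3 := List.toFinset_card_le (x :: z :: t)
        simp only [List.length_cons] at h3 ⊢
        simp only [List.length_cons] at hxslen
        omega)
  -- name the last vertex
  have hxmne : (x :: m) ≠ [] := List.cons_ne_nil _ _
  set xlast := (x :: m).getLast hxmne with hxlastdef
  have hlast1 : (x :: z :: t).getLast? = some xlast := by
    rw [← hlastm, List.getLast?_eq_getLast hxmne]
  have hxlast_eq : xlast = (x :: z :: t).getLast (List.cons_ne_nil _ _) := by
    have h2 := List.getLast?_eq_getLast (List.cons_ne_nil x (z :: t))
    rw [hlast1] at h2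
    exact Option.some_inj.mp h2
  have hxlast_mem : xlast ∈ x :: z :: t := by
    rw [hxlast_eq]; exact List.getLast_mem _
  have hxlast_mem' : xlast ∈ z :: t := by
    rw [hxlast_eq, List.getLast_cons (List.cons_ne_nil z t)]
    exact List.getLast_mem _
  have hyxlast : G.Adj y xlast := hyadj _ hxlast_mem'
  have hx_ne : x ≠ xlast := fun h => (List.nodup_cons.mp hndl').1 (h ▸ hxlast_mem')
  have hyxm : y ∉ x :: m := by
    intro hmem
    rcases List.mem_cons.mp hmem with h | hmem
    · exact hyl (by rw [h]; simp)
    · have := hmemm y hmem (Finset.mem_insert_self _ _)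
      exact hyl (List.mem_cons_of_mem _ this)
  -- build the closed walk
  have hchainW : List.Chain G.Adj y ((x :: m) ++ [y]) := by
    apply chain_of_chain'_concat (x :: m) y y (List.isChain_cons_cons.mpr ⟨hyx, hchm⟩)
    intro z' hz'
    rw [List.getLast?_cons_cons, List.getLast?_eq_getLast hxmne, Option.some_inj] at hz'
    subst hz'
    exact hyxlast.symm
  set W : G.Walk y y := mkWalk G y (x :: m) y hchainW with hWdef
  have hWlen : W.length = 2 * k := by
    have : W.length = (x :: m).length + 1 := mkWalk_length G y (x :: m) y hchainW
    simp only [List.length_cons] at this hxslen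
    simp only [List.length_cons] at hlenm
    omega
  -- the colour list of the walk
  have hlastxm : (x :: m).getLast? = some xlast :=
    List.getLast?_eq_getLast hxmne
  have hedges : W.edges.map c
      = c s(y, x) :: ((sym2List (x :: m)).map c ++ [c s(xlast, y)]) := by
    have h0 : W.edges = sym2List (y :: ((x :: m) ++ [y])) :=
      mkWalk_edges G y (x :: m) y hchainW
    have h1 : sym2List ((x :: m) ++ [y]) = sym2List (x :: m) ++ [s(xlast, y)] :=
      sym2List_concat m x y xlast hlastxm
    have h2 : sym2List (y :: ((x :: m) ++ [y]))
        = s(y, x) :: sym2List ((x :: m) ++ [y]) := by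
      rw [List.cons_append, sym2List_cons_cons]
    rw [h0, h2, h1]
    simp
  -- colour facts
  have hcyxB : c s(y, x) ∈ (x :: z :: t).toFinset.image (fun v => c s(y, v)) :=
    Finset.mem_image_of_mem _ (by simp)
  have hcylastB : c s(y, xlast) ∈ (x :: z :: t).toFinset.image (fun v => c s(y, v)) :=
    Finset.mem_image_of_mem _ (by simpa using hxlast_mem)
  have h1 : c s(y, x) ∉ (sym2List (x :: m)).map c := fun h => hcB _ h hcyxB
  have h2 : c s(xlast, y) ∉ (sym2List (x :: m)).map c := by
    rw [show s(xlast, y) = s(y, xlast) from Sym2.eq_swap]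
    exact fun h => hcB _ h hcylastB
  have h3 : c s(y, x) ≠ c s(xlast, y) := by
    rw [show s(xlast, y) = s(y, xlast) from Sym2.eq_swap]
    exact color_inj_left hG hyx hyxlast hx_ne
  have hcolnodup : (W.edges.map c).Nodup := by
    rw [hedges, List.nodup_cons]
    constructor
    · simp only [List.mem_append, List.mem_singleton]
      push_neg
      exact ⟨h1, h3⟩
    · rw [List.nodup_append]
      refine ⟨hcnd, List.nodup_singleton _, ?_⟩
      intro a ha b hb hab
      simp only [List.mem_singleton] at hb
      subst hb
      subst hab
      exact h2 ha
  -- cycle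
  have hsupp : W.support.tail = (x :: m) ++ [y] := by
    rw [hWdef, mkWalk_support]
    rfl
  have htail : W.support.tail.Nodup := by
    rw [hsupp, List.nodup_append]
    refine ⟨hndm, List.nodup_singleton _, ?_⟩
    intro a ha b hb hab
    simp only [List.mem_singleton] at hb
    subst hb
    subst hab
    exact hyxm ha
  have hcyc : W.IsCycle := by
    rw [SimpleGraph.Walk.isCycle_def]
    refine ⟨(SimpleGraph.Walk.isTrail_def W).mpr (List.Nodup.of_map c hcolnodup), ?_, htail⟩
    intro h
    rw [h] at hWlen
    simp at hWlen
    omega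
  exact hnc ⟨y, W, hcyc, hWlen, hcolnodup⟩

end Auxiliary

/-- in a properly coloured `n`-vertex graph with no rainbow `C_{2k}`,
the number of paths `(x, y, z)` whose endpoints have at least `100k` common neighbours
is at most `C·|E(G)|` for a constant `C = C(k)`. -/
theorem bad_cherry_count (k : ℕ) (hk : 2 ≤ k) :
    ∃ C : ℕ, ∀ (V : Type) [Fintype V] (G : SimpleGraph V) (γ : Type) (c : Sym2 V → γ),
      ProperColoring G c → ¬ HasRainbowCycle G c (2 * k) →
      {p : V × V × V | G.Adj p.1 p.2.1 ∧ G.Adj p.2.1 p.2.2 ∧ p.1 ≠ p.2.2 ∧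
          100 * k ≤ (G.neighborSet p.1 ∩ G.neighborSet p.2.2).ncard}.ncard
        ≤ C * G.edgeSet.ncard := by
  classical
  refine ⟨4 * k, ?_⟩
  intro V _ G γ c hG hnc
  classical
  set S : Set (V × V × V) := {p : V × V × V | G.Adj p.1 p.2.1 ∧ G.Adj p.2.1 p.2.2 ∧
      p.1 ≠ p.2.2 ∧ 100 * k ≤ (G.neighborSet p.1 ∩ G.neighborSet p.2.2).ncard} with hSdef
  have hS : S.ncard = S.toFinset.card := Set.ncard_eq_toFinset_card' S
  have hfib : S.toFinset.card
      = ∑ y : V, (S.toFinset.filter (fun p => p.2.1 = y)).card :=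
    Finset.card_eq_sum_card_fiberwise (fun x _ => Finset.mem_univ _)
  have hper : ∀ y : V, (S.toFinset.filter (fun p => p.2.1 = y)).card
      ≤ 2 * k * G.degree y := by
    intro y
    have hsym : ∀ a b, Rrel G k y a b → Rrel G k y b a := by
      intro a b ⟨h1, h2, h3, h4⟩
      exact ⟨h2, h1, h3.symm, by rwa [Set.inter_comm]⟩
    have hnp : ∀ l : List V, (∀ x ∈ l, x ∈ G.neighborFinset y) → l.Nodup →
        l.Chain' (Rrel G k y) → l.length < k :=
      fun l _ h2 h3 => key hG hk hnc y l h2 h3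
    have hpairs := nopath_pairs (Rrel G k y) hsym k (by omega) (G.neighborFinset y) hnp
    have hinj : (S.toFinset.filter (fun p => p.2.1 = y)).card
        ≤ (((G.neighborFinset y) ×ˢ (G.neighborFinset y)).filter
            (fun q => Rrel G k y q.1 q.2)).card := by
      apply Finset.card_le_card_of_injOn (fun p => (p.1, p.2.2))
      · intro p hp
        rw [Finset.mem_coe, Finset.mem_filter, Set.mem_toFinset, hSdef] at hp
        obtain ⟨⟨ha1, ha2, hne, hcd⟩, hy⟩ := hp
        subst hy
        refine Finset.mem_filter.mpr ⟨Finset.mem_product.mpr ⟨?_, ?_⟩, ?_⟩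
        · exact (mem_neighborFinset _ _ _).mpr ha1.symm
        · exact (mem_neighborFinset _ _ _).mpr ha2
        · exact ⟨ha1.symm, ha2, hne, hcd⟩
      · intro p hp q hq hpq
        simp only [Finset.mem_coe, Finset.mem_filter] at hp hq
        simp only [Prod.mk.injEq] at hpq
        have h1 : p.1 = q.1 := hpq.1
        have h2 : p.2.2 = q.2.2 := hpq.2
        have h3 : p.2.1 = q.2.1 := by rw [hp.2, hq.2]
        exact Prod.ext h1 (Prod.ext h3 h2)
    calc (S.toFinset.filter (fun p => p.2.1 = y)).card ≤ _ := hinj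
      _ ≤ 2 * k * (G.neighborFinset y).card := hpairs
      _ = 2 * k * G.degree y := rfl
  have hsum : ∑ y : V, (S.toFinset.filter (fun p => p.2.1 = y)).card
      ≤ 2 * k * ∑ y : V, G.degree y := by
    rw [Finset.mul_sum]
    exact Finset.sum_le_sum (fun y _ => hper y)
  have hdeg : ∑ y : V, G.degree y = 2 * G.edgeFinset.card :=
    G.sum_degrees_eq_twice_card_edges
  have hedge : G.edgeSet.ncard = G.edgeFinset.card := by
    rw [Set.ncard_eq_toFinset_card']
    rfl
  rw [hS, hfib, hedge]
  calc _ ≤ 2 * k * ∑ y : V, G.degree y := hsum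
    _ = 2 * k * (2 * G.edgeFinset.card) := by rw [hdeg]
    _ = 4 * k * G.edgeFinset.card := by ring
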